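/- arXiv:2208.10476 — 2 statements merged into one kernel-verified Lean document; each statement's English description precedes it below -/
import Mathlib

section
/- If J is a strongly stable monomial ideal in K[x_1,...,x_n], then the intersection I = ∩_{σ ∈ 𝔖_n} σ(J) is a symmetric strongly shifted ideal, and the partitions λ with x^λ ∈ I are exactly the partitions λ ∈ P_n with x^λ ∈ J. -/
open MvPolynomial

/-- The monomial `x^a` in `K[x_1,...,x_n]`. -/
noncomputable def mon (K : Type) [Field K] (n : ℕ) (a : Fin n → ℕ) :
    MvPolynomial (Fin n) K :=
  monomial (Finsupp.equivFunOnFinite.symm a) 1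

/-- A monomial ideal: an ideal generated by monomials. -/
def IsMonomialIdeal (K : Type) [Field K] (n : ℕ)
    (I : Ideal (MvPolynomial (Fin n) K)) : Prop :=
  ∃ S : Set (Fin n → ℕ), I = Ideal.span (mon K n '' S)

/-- A symmetric (`𝔖_n`-fixed) ideal. -/
def IsSymmetricIdeal (K : Type) [Field K] (n : ℕ)
    (I : Ideal (MvPolynomial (Fin n) K)) : Prop :=
  ∀ σ : Equiv.Perm (Fin n), Ideal.map (rename (σ : Fin n → Fin n)) I = I

/-- The exponent vector obtained from `a` by the Borel move `x^a ↦ x^a · x_i / x_j`. -/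
def borelMoveVec (n : ℕ) (a : Fin n → ℕ) (i j : Fin n) : Fin n → ℕ :=
  fun k => if k = i then a k + 1 else if k = j then a k - 1 else a k

/-- A symmetric strongly shifted ideal (sssi). -/
def IsSSSI (K : Type) [Field K] (n : ℕ)
    (I : Ideal (MvPolynomial (Fin n) K)) : Prop :=
  IsMonomialIdeal K n I ∧ IsSymmetricIdeal K n I ∧
    ∀ lam : Fin n → ℕ, Monotone lam → mon K n lam ∈ I →
      ∀ i j : Fin n, i < j → lam i < lam j →
        mon K n (borelMoveVec n lam i j) ∈ I

/-- The dominance order on partitions: `μ ⊴ λ`. -/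
def dominates (n : ℕ) (μ lam : Fin n → ℕ) : Prop :=
  ∀ k : Fin n, ∑ i ∈ Finset.Ici k, μ i ≤ ∑ i ∈ Finset.Ici k, lam i

/-- A strongly stable monomial ideal: a monomial ideal closed under the Borel
moves `x^a ↦ x^a · x_i / x_j` for `i < j` with `a_j ≠ 0`. -/
def IsStronglyStable (K : Type) [Field K] (n : ℕ)
    (I : Ideal (MvPolynomial (Fin n) K)) : Prop :=
  IsMonomialIdeal K n I ∧
    ∀ a : Fin n → ℕ, mon K n a ∈ I → ∀ i j : Fin n, i < j → a j ≠ 0 →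
      mon K n (borelMoveVec n a i j) ∈ I

variable {K : Type} [Field K] {n : ℕ}

lemma rename_mon (σ : Equiv.Perm (Fin n)) (a : Fin n → ℕ) :
    rename (σ : Fin n → Fin n) (mon K n (a ∘ σ)) = mon K n a := by
  rw [mon, mon, rename_monomial]
  have : Finsupp.mapDomain ⇑σ (Finsupp.equivFunOnFinite.symm (a ∘ ⇑σ)) =
      Finsupp.equivFunOnFinite.symm a := by
    ext k
    rw [Finsupp.mapDomain_equiv_apply]
    simp
  rw [this]

lemma coe_inv_comp (σ : Equiv.Perm (Fin n)) : (σ : Fin n → Fin n) ∘ (σ⁻¹ : Equiv.Perm (Fin n)) = id := by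
  funext x; simp

lemma coe_comp_inv (σ : Equiv.Perm (Fin n)) : ((σ⁻¹ : Equiv.Perm (Fin n)) : Fin n → Fin n) ∘ σ = id := by
  funext x; simp

lemma rename_perm_surj (σ : Equiv.Perm (Fin n)) :
    Function.Surjective (rename (σ : Fin n → Fin n) : MvPolynomial (Fin n) K → MvPolynomial (Fin n) K) := by
  intro x
  refine ⟨rename (σ⁻¹ : Equiv.Perm (Fin n)) x, ?_⟩
  rw [rename_rename, coe_inv_comp, rename_id]
  rfl

lemma mem_map_rename_iff (σ : Equiv.Perm (Fin n)) (J : Ideal (MvPolynomial (Fin n) K)) (a : Fin n → ℕ) :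
    mon K n a ∈ Ideal.map (rename (σ : Fin n → Fin n)) J ↔ mon K n (a ∘ σ) ∈ J := by
  constructor
  · intro h
    obtain ⟨x, hx, hfx⟩ := (Ideal.mem_map_iff_of_surjective _ (rename_perm_surj σ)).1 h
    have : mon K n (a ∘ σ) = x := by
      apply rename_injective (σ : Fin n → Fin n) σ.injective
      rw [rename_mon, hfx]
    rwa [this]
  · intro h
    rw [← rename_mon σ a]
    exact Ideal.mem_map_of_mem _ h

lemma swap_mem {J : Ideal (MvPolynomial (Fin n) K)} (hJ : IsStronglyStable K n J)
    {a : Fin n → ℕ} (h : mon K n a ∈ J) {i j : Fin n} (hij : i < j) (hle : a i ≤ a j) :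
    mon K n (a ∘ (Equiv.swap i j : Equiv.Perm (Fin n))) ∈ J := by
  have hne : i ≠ j := ne_of_lt hij
  have key : ∀ k, k ≤ a j - a i →
      mon K n (fun t => if t = i then a i + k else if t = j then a j - k else a t) ∈ J := by
    intro k
    induction k with
    | zero =>
      intro _
      convert h using 2
      funext t
      rcases eq_or_ne t i with h1 | h1
      · simp [h1]
      · rcases eq_or_ne t j with h2 | h2
        · simp [h1, h2, Ne.symm hne]
        · simp [h1, h2]
    | succ k ih =>
      intro hk
      have hbj : (fun t => if t = i then a i + k else if t = j then a j - k else a t) j ≠ 0 := by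
        show (if j = i then a i + k else if j = j then a j - k else a j) ≠ 0
        rw [if_neg (Ne.symm hne), if_pos rfl]
        omega
      have hb := hJ.2 _ (ih (by omega)) i j hij hbj
      convert hb using 2
      funext t
      simp only [borelMoveVec]
      rcases eq_or_ne t i with h1 | h1
      · simp [h1, hne]
        omega
      · rcases eq_or_ne t j with h2 | h2
        · simp [h1, h2, Ne.symm hne]
          omega
        · simp [h1, h2]
  have h0 := key (a j - a i) le_rfl
  convert h0 using 2
  funext t
  rcases eq_or_ne t i with h1 | h1
  · simp [h1, Equiv.swap_apply_left]
    omega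
  · rcases eq_or_ne t j with h2 | h2
    · simp [h1, h2, Ne.symm hne, Equiv.swap_apply_right]
      omega
    · simp [h1, h2, Equiv.swap_apply_of_ne_of_ne h1 h2]

def meas (n : ℕ) (b : Fin n → ℕ) : ℕ := ∑ k : Fin n, (n - 1 - (k : ℕ)) * b k

lemma meas_swap_lt {b : Fin n → ℕ} {p q : Fin n} (hpq : p < q) (hb : b q < b p) :
    meas n (b ∘ (Equiv.swap p q : Equiv.Perm (Fin n))) < meas n b := by
  classical
  have hne : p ≠ q := ne_of_lt hpq
  have hq : q ∈ Finset.univ.erase p := Finset.mem_erase.2 ⟨Ne.symm hne, Finset.mem_univ q⟩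
  have split : ∀ f : Fin n → ℕ,
      ∑ k : Fin n, f k = f p + (f q + ∑ k ∈ (Finset.univ.erase p).erase q, f k) := by
    intro f
    rw [← Finset.add_sum_erase _ f (Finset.mem_univ p), ← Finset.add_sum_erase _ f hq]
  rw [meas, meas, split (fun k => (n - 1 - (k : ℕ)) * (b ∘ (Equiv.swap p q : Equiv.Perm (Fin n))) k),
    split (fun k => (n - 1 - (k : ℕ)) * b k)]
  have hrest : ∑ k ∈ (Finset.univ.erase p).erase q,
      (n - 1 - (k : ℕ)) * (b ∘ (Equiv.swap p q : Equiv.Perm (Fin n))) k =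
      ∑ k ∈ (Finset.univ.erase p).erase q, (n - 1 - (k : ℕ)) * b k := by
    apply Finset.sum_congr rfl
    intro k hk
    have hk1 : k ≠ q := (Finset.mem_erase.1 hk).1
    have hk2 : k ≠ p := (Finset.mem_erase.1 (Finset.mem_erase.1 hk).2).1
    simp [Equiv.swap_apply_of_ne_of_ne hk2 hk1]
  rw [hrest]
  simp only [Function.comp_apply, Equiv.swap_apply_left, Equiv.swap_apply_right]
  have hclt : (n - 1 - (q : ℕ)) < (n - 1 - (p : ℕ)) := by
    have h1 : (p : ℕ) < (q : ℕ) := hpq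
    have h2 : (q : ℕ) < n := q.isLt
    omega
  have key : ∀ cp cq bp bq : ℕ, cq < cp → bq < bp →
      cp * bq + cq * bp < cp * bp + cq * bq := by
    intro cp cq bp bq h1 h2
    obtain ⟨dc, rfl⟩ : ∃ dc, cp = cq + dc + 1 := ⟨cp - cq - 1, by omega⟩
    obtain ⟨db, rfl⟩ : ∃ db, bp = bq + db + 1 := ⟨bp - bq - 1, by omega⟩
    ring_nf
    nlinarith [Nat.zero_le (dc * db)]
  have := key _ _ _ _ hclt hb
  omega

lemma perm_mem {J : Ideal (MvPolynomial (Fin n) K)} (hJ : IsStronglyStable K n J)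
    {lam : Fin n → ℕ} (hlam : Monotone lam) (h : mon K n lam ∈ J) (σ : Equiv.Perm (Fin n)) :
    mon K n (lam ∘ σ) ∈ J := by
  suffices H : ∀ m (σ : Equiv.Perm (Fin n)), meas n (lam ∘ σ) ≤ m → mon K n (lam ∘ σ) ∈ J from
    H _ σ le_rfl
  intro m
  induction m using Nat.strong_induction_on with
  | _ m ih =>
    intro σ hm
    by_cases hmono : Monotone (lam ∘ (σ : Fin n → Fin n))
    · have he : lam ∘ (σ : Fin n → Fin n) = lam ∘ ((1 : Equiv.Perm (Fin n)) : Fin n → Fin n) :=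
        Tuple.unique_monotone hmono (by simpa using hlam)
      rw [he]
      simpa using h
    · rw [Monotone] at hmono
      push_neg at hmono
      obtain ⟨x, y, hxy, hlt⟩ := hmono
      replace hlt : (lam ∘ ⇑σ) y < (lam ∘ ⇑σ) x := by omega
      have hxy' : x < y := lt_of_le_of_ne hxy (by rintro rfl; omega)
      set s : Equiv.Perm (Fin n) := Equiv.swap x y with hs
      have hcomp : (lam ∘ ⇑σ) ∘ ⇑s = lam ∘ ⇑(σ * s) := by
        funext t; simp [Equiv.Perm.coe_mul]
      have hmlt : meas n (lam ∘ ⇑(σ * s)) < m := by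
        rw [← hcomp]
        exact lt_of_lt_of_le (meas_swap_lt hxy' hlt) hm
      have h1 : mon K n (lam ∘ ⇑(σ * s)) ∈ J := ih _ hmlt _ le_rfl
      have hx : (lam ∘ ⇑(σ * s)) x = (lam ∘ ⇑σ) y := by
        simp [hs, Equiv.Perm.coe_mul, Equiv.swap_apply_left]
      have hy : (lam ∘ ⇑(σ * s)) y = (lam ∘ ⇑σ) x := by
        simp [hs, Equiv.Perm.coe_mul, Equiv.swap_apply_right]
      have h2 := swap_mem hJ h1 hxy' (by rw [hx, hy]; exact le_of_lt hlt)
      have hfin : (lam ∘ ⇑(σ * s)) ∘ (Equiv.swap x y : Equiv.Perm (Fin n)) = lam ∘ ⇑σ := by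
        funext t
        simp [hs, Equiv.Perm.coe_mul, Equiv.swap_apply_self]
      rwa [hfin] at h2

lemma mon_image_eq (K : Type) [Field K] (n : ℕ) (S : Set (Fin n → ℕ)) :
    mon K n '' S = (fun d => monomial d (1 : K)) '' (Finsupp.equivFunOnFinite.symm '' S) := by
  rw [Set.image_image]; rfl

lemma monomial_mem_span_iff (d : Fin n →₀ ℕ) (S' : Set (Fin n →₀ ℕ)) :
    monomial d (1 : K) ∈ Ideal.span ((fun d => monomial d (1 : K)) '' S') ↔ ∃ s ∈ S', s ≤ d := by
  rw [mem_ideal_span_monomial_image]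
  simp [support_monomial]

lemma map_span_monomials (σ : Equiv.Perm (Fin n)) (S' : Set (Fin n →₀ ℕ)) :
    Ideal.map (rename (σ : Fin n → Fin n)) (Ideal.span ((fun d => monomial d (1 : K)) '' S')) =
      Ideal.span ((fun d => monomial d (1 : K)) ''
        (Finsupp.mapDomain (σ : Fin n → Fin n) '' S')) := by
  rw [Ideal.map_span, Set.image_image, Set.image_image]
  congr 1
  apply Set.image_congr
  intro d _
  simp [rename_monomial]

lemma monomial_ideal_inf {J : Ideal (MvPolynomial (Fin n) K)} (hJ : IsMonomialIdeal K n J) :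
    IsMonomialIdeal K n (⨅ σ : Equiv.Perm (Fin n), Ideal.map (rename (σ : Fin n → Fin n)) J) := by
  classical
  obtain ⟨S, rfl⟩ := hJ
  set I := ⨅ σ : Equiv.Perm (Fin n),
      Ideal.map (rename (σ : Fin n → Fin n)) (Ideal.span (mon K n '' S)) with hI
  set T : Set (Fin n →₀ ℕ) := {d | monomial d (1 : K) ∈ I} with hT
  refine ⟨Finsupp.equivFunOnFinite '' T, ?_⟩
  have himg : mon K n '' (Finsupp.equivFunOnFinite '' T) = (fun d => monomial d (1:K)) '' T := by
    rw [Set.image_image]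
    apply Set.image_congr
    intro d _
    simp [mon]
  rw [himg]
  have hmap : ∀ σ : Equiv.Perm (Fin n),
      Ideal.map (rename (σ : Fin n → Fin n)) (Ideal.span (mon K n '' S)) =
        Ideal.span ((fun d => monomial d (1:K)) ''
          (Finsupp.mapDomain (σ : Fin n → Fin n) '' (Finsupp.equivFunOnFinite.symm '' S))) := by
    intro σ
    rw [mon_image_eq, map_span_monomials]
  apply le_antisymm
  · intro f hf
    rw [mem_ideal_span_monomial_image]
    intro d hd
    refine ⟨d, ?_, le_rfl⟩
    show monomial d (1:K) ∈ I
    rw [hI, Ideal.mem_iInf]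
    intro σ
    rw [hI] at hf
    have hfσ := Ideal.mem_iInf.1 hf σ
    rw [hmap σ] at hfσ ⊢
    rw [mem_ideal_span_monomial_image] at hfσ
    rw [monomial_mem_span_iff]
    exact hfσ d hd
  · rw [Ideal.span_le]
    rintro g ⟨d, hd, rfl⟩
    exact hd

lemma map_map_rename (τ ρ : Equiv.Perm (Fin n)) (X : Ideal (MvPolynomial (Fin n) K)) :
    Ideal.map (rename (τ : Fin n → Fin n)) (Ideal.map (rename (ρ : Fin n → Fin n)) X) =
      Ideal.map (rename (((τ * ρ) : Equiv.Perm (Fin n)) : Fin n → Fin n)) X := by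
  have e1 : ∀ (g : MvPolynomial (Fin n) K →ₐ[K] MvPolynomial (Fin n) K)
      (Y : Ideal (MvPolynomial (Fin n) K)), Ideal.map g Y = Ideal.map g.toRingHom Y :=
    fun g Y => rfl
  rw [e1, e1, e1, Ideal.map_map]
  congr 1
  ext x : 2
  · simp [rename_rename]
  · simp [rename_rename]

lemma map_rename_inv_map (τ : Equiv.Perm (Fin n)) (X : Ideal (MvPolynomial (Fin n) K)) :
    Ideal.map (rename (τ : Fin n → Fin n))
      (Ideal.map (rename ((τ⁻¹ : Equiv.Perm (Fin n)) : Fin n → Fin n)) X) = X := by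
  rw [map_map_rename, mul_inv_cancel]
  have e1 : ∀ (g : MvPolynomial (Fin n) K →ₐ[K] MvPolynomial (Fin n) K)
      (Y : Ideal (MvPolynomial (Fin n) K)), Ideal.map g Y = Ideal.map g.toRingHom Y :=
    fun g Y => rfl
  rw [e1]
  have : (rename (((1 : Equiv.Perm (Fin n)) : Fin n → Fin n)) :
      MvPolynomial (Fin n) K →ₐ[K] MvPolynomial (Fin n) K).toRingHom =
      RingHom.id (MvPolynomial (Fin n) K) := by
    ext x : 2 <;> simp
  rw [this, Ideal.map_id]

lemma symm_inf (J : Ideal (MvPolynomial (Fin n) K)) :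
    IsSymmetricIdeal K n (⨅ σ : Equiv.Perm (Fin n), Ideal.map (rename (σ : Fin n → Fin n)) J) := by
  set I := ⨅ σ : Equiv.Perm (Fin n), Ideal.map (rename (σ : Fin n → Fin n)) J with hI
  have hle : ∀ ρ : Equiv.Perm (Fin n), Ideal.map (rename (ρ : Fin n → Fin n)) I ≤ I := by
    intro ρ
    rw [hI]
    refine le_iInf fun σ' => ?_
    have h1 : I ≤ Ideal.map (rename (((ρ⁻¹ * σ') : Equiv.Perm (Fin n)) : Fin n → Fin n)) J :=
      iInf_le _ _
    calc Ideal.map (rename (ρ : Fin n → Fin n)) I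
        ≤ Ideal.map (rename (ρ : Fin n → Fin n))
            (Ideal.map (rename (((ρ⁻¹ * σ') : Equiv.Perm (Fin n)) : Fin n → Fin n)) J) :=
          Ideal.map_mono h1
      _ = Ideal.map (rename (σ' : Fin n → Fin n)) J := by
          rw [map_map_rename, mul_inv_cancel_left]
  intro τ
  apply le_antisymm (hle τ)
  calc I = Ideal.map (rename (τ : Fin n → Fin n))
        (Ideal.map (rename ((τ⁻¹ : Equiv.Perm (Fin n)) : Fin n → Fin n)) I) :=
        (map_rename_inv_map τ I).symm
    _ ≤ Ideal.map (rename (τ : Fin n → Fin n)) I := Ideal.map_mono (hle τ⁻¹)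

lemma mem_inf_iff (J : Ideal (MvPolynomial (Fin n) K)) (a : Fin n → ℕ) :
    (mon K n a ∈ ⨅ σ : Equiv.Perm (Fin n), Ideal.map (rename (σ : Fin n → Fin n)) J) ↔
      ∀ σ : Equiv.Perm (Fin n), mon K n (a ∘ σ) ∈ J := by
  rw [Ideal.mem_iInf]
  exact forall_congr' fun σ => mem_map_rename_iff σ J a

lemma borel_cond {J : Ideal (MvPolynomial (Fin n) K)} (hJ : IsStronglyStable K n J)
    {lam : Fin n → ℕ} (h : ∀ σ : Equiv.Perm (Fin n), mon K n (lam ∘ σ) ∈ J)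
    {i j : Fin n} (hij : i < j) (hlt : lam i < lam j) (σ : Equiv.Perm (Fin n)) :
    mon K n (borelMoveVec n lam i j ∘ σ) ∈ J := by
  classical
  set p := σ⁻¹ i with hp
  set q := σ⁻¹ j with hq
  have hσp : σ p = i := σ.apply_symm_apply i
  have hσq : σ q = j := σ.apply_symm_apply j
  have hpq : p ≠ q := fun hh => (ne_of_lt hij) (by rw [← hσp, ← hσq, hh])
  have hval : ∀ t, (borelMoveVec n lam i j ∘ ⇑σ) t =
      if t = p then lam i + 1 else if t = q then lam j - 1 else lam (σ t) := by
    intro t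
    simp only [Function.comp_apply, borelMoveVec]
    rcases eq_or_ne t p with h1 | h1
    · rw [h1, hσp, if_pos rfl, if_pos rfl]
    · have hne1 : σ t ≠ i := fun hh => h1 (by rw [← hσp] at hh; exact σ.injective hh)
      rw [if_neg hne1, if_neg h1]
      rcases eq_or_ne t q with h2 | h2
      · rw [h2, hσq, if_pos rfl, if_pos rfl]
      · have hne2 : σ t ≠ j := fun hh => h2 (by rw [← hσq] at hh; exact σ.injective hh)
        rw [if_neg hne2, if_neg h2]
  rcases lt_trichotomy p q with hplt | heq | hqlt
  · have hb := hJ.2 (lam ∘ ⇑σ) (h σ) p q hplt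
      (by simp only [Function.comp_apply, hσq]; omega)
    convert hb using 2
    funext t
    rw [hval t]
    simp only [borelMoveVec, Function.comp_apply]
    rcases eq_or_ne t p with h1 | h1
    · rw [if_pos h1, if_pos h1, h1, hσp]
    · rw [if_neg h1, if_neg h1]
      rcases eq_or_ne t q with h2 | h2
      · rw [if_pos h2, if_pos h2, h2, hσq]
      · rw [if_neg h2, if_neg h2]
  · exact absurd heq hpq
  · rcases eq_or_lt_of_le (Nat.succ_le_of_lt hlt) with he | hlt2
    · have heq2 : borelMoveVec n lam i j ∘ ⇑σ = lam ∘ ⇑(σ * Equiv.swap p q) := by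
        funext t
        rw [hval t]
        simp only [Equiv.Perm.coe_mul, Function.comp_apply]
        rcases eq_or_ne t p with h1 | h1
        · rw [if_pos h1, h1, Equiv.swap_apply_left, hσq]
          omega
        · rw [if_neg h1]
          rcases eq_or_ne t q with h2 | h2
          · rw [if_pos h2, h2, Equiv.swap_apply_right, hσp]
            omega
          · rw [if_neg h2, Equiv.swap_apply_of_ne_of_ne h1 h2]
      rw [heq2]
      exact h _
    · set a'' := lam ∘ ⇑(σ * Equiv.swap p q) with ha
      have ha'' : ∀ t, a'' t = if t = p then lam j else if t = q then lam i else lam (σ t) := by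
        intro t
        rw [ha]
        simp only [Equiv.Perm.coe_mul, Function.comp_apply]
        rcases eq_or_ne t p with h1 | h1
        · rw [if_pos h1, h1, Equiv.swap_apply_left, hσq]
        · rw [if_neg h1]
          rcases eq_or_ne t q with h2 | h2
          · rw [if_pos h2, h2, Equiv.swap_apply_right, hσp]
          · rw [if_neg h2, Equiv.swap_apply_of_ne_of_ne h1 h2]
      have hc := hJ.2 a'' (h _) q p hqlt (by rw [ha'' p, if_pos rfl]; omega)
      have hcval : ∀ t, borelMoveVec n a'' q p t =
          if t = q then lam i + 1 else if t = p then lam j - 1 else lam (σ t) := by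
        intro t
        simp only [borelMoveVec]
        rcases eq_or_ne t q with h1 | h1
        · rw [if_pos h1, if_pos h1, h1, ha'' q, if_neg (Ne.symm hpq), if_pos rfl]
        · rw [if_neg h1, if_neg h1]
          rcases eq_or_ne t p with h2 | h2
          · rw [if_pos h2, if_pos h2, h2, ha'' p, if_pos rfl]
          · rw [if_neg h2, if_neg h2, ha'' t, if_neg h2, if_neg h1]
      have hs := swap_mem hJ hc hqlt
        (by rw [hcval q, if_pos rfl, hcval p, if_neg hpq, if_pos rfl]; omega)
      have hfin : borelMoveVec n a'' q p ∘ (Equiv.swap q p : Equiv.Perm (Fin n)) =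
          borelMoveVec n lam i j ∘ ⇑σ := by
        funext t
        rw [Function.comp_apply, hval t]
        rcases eq_or_ne t p with h1 | h1
        · rw [h1, Equiv.swap_apply_right, hcval q, if_pos rfl, if_pos rfl]
        · rw [if_neg h1]
          rcases eq_or_ne t q with h2 | h2
          · rw [h2, Equiv.swap_apply_left, hcval p, if_neg hpq, if_pos rfl, if_pos rfl]
          · rw [Equiv.swap_apply_of_ne_of_ne h2 h1, hcval t, if_neg h2, if_neg h1, if_neg h2]
      rwa [hfin] at hs

/-- If `J` is a strongly stable monomial ideal, then its symmetrization
`I = ∩_{σ ∈ 𝔖_n} σ(J)` is a symmetric strongly shifted ideal, and the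
partitions `λ` with `x^λ ∈ I` are exactly the partitions `λ` with `x^λ ∈ J`. -/
theorem symmetrization_of_stronglyStable (K : Type) [Field K] (n : ℕ)
    (J : Ideal (MvPolynomial (Fin n) K)) (hJ : IsStronglyStable K n J) :
    IsSSSI K n (⨅ σ : Equiv.Perm (Fin n), Ideal.map (rename (σ : Fin n → Fin n)) J) ∧
    ∀ lam : Fin n → ℕ, Monotone lam →
      ((mon K n lam ∈
          ⨅ σ : Equiv.Perm (Fin n), Ideal.map (rename (σ : Fin n → Fin n)) J) ↔
        mon K n lam ∈ J) := by
  constructor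
  · refine ⟨monomial_ideal_inf hJ.1, symm_inf J, ?_⟩
    intro lam hlam hmem i j hij hlt
    rw [mem_inf_iff]
    intro σ
    exact borel_cond hJ ((mem_inf_iff J lam).1 hmem) hij hlt σ
  · intro lam hlam
    constructor
    · intro h
      have h1 := (mem_inf_iff J lam).1 h 1
      simpa using h1
    · intro h
      rw [mem_inf_iff]
      exact perm_mem hJ hlam h
end

section
/- For sets of partitions A, B ⊆ P_n, one has Sss(A) · Sss(B) = Sss(A + B), where A + B = {λ + μ : λ ∈ A, μ ∈ B}. In particular, for any partitions λ', μ' ∈ P_n with λ' ⊴ λ, μ' ⊴ μ (same sizes) and any permutations σ, τ ∈ 𝔖_n, the partition part(σ(λ') + τ(μ')) is dominated by λ + μ. -/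
open MvPolynomial

/-- `Sss(B)`: the smallest symmetric strongly shifted ideal containing the
monomials `x^λ`, `λ ∈ B`. -/
noncomputable def Sss (K : Type) [Field K] (n : ℕ) (B : Set (Fin n → ℕ)) :
    Ideal (MvPolynomial (Fin n) K) :=
  sInf {J | IsSSSI K n J ∧ ∀ lam ∈ B, mon K n lam ∈ J}

section Helpers

open MvPolynomial Finset

variable {n : ℕ}

/-- Suffix sum: sum of `v i` over indices with `k ≤ i`. -/
def Sfun (n : ℕ) (v : Fin n → ℕ) (k : ℕ) : ℕ :=
  ∑ i ∈ Finset.univ.filter (fun i : Fin n => k ≤ (i : ℕ)), v i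

lemma Sfun_add (v w : Fin n → ℕ) (k : ℕ) :
    Sfun n (v + w) k = Sfun n v k + Sfun n w k := by
  simp [Sfun, Finset.sum_add_distrib]

lemma Sfun_of_ge (v : Fin n → ℕ) {k : ℕ} (hk : n ≤ k) : Sfun n v k = 0 := by
  rw [Sfun, Finset.sum_eq_zero_iff]
  intro i hi
  simp only [Finset.mem_filter] at hi
  omega

lemma card_filter_geIdx (k : ℕ) :
    (Finset.univ.filter (fun i : Fin n => k ≤ (i : ℕ))).card = n - k := by
  rcases le_or_gt n k with h | h
  · rw [Finset.card_eq_zero.2, Nat.sub_eq_zero_of_le h]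
    rw [Finset.filter_eq_empty_iff]
    intro i _
    simp only [not_le]
    omega
  · have : (Finset.univ.filter (fun i : Fin n => k ≤ (i : ℕ))) = Finset.Ici (⟨k, h⟩ : Fin n) := by
      ext i
      simp [Fin.le_def]
    rw [this, Fin.card_Ici]

lemma Ici_eq_filter (k : Fin n) :
    Finset.Ici k = Finset.univ.filter (fun i : Fin n => (k : ℕ) ≤ (i : ℕ)) := by
  ext i
  simp only [Finset.mem_Ici, Finset.mem_filter, Finset.mem_univ, true_and, Fin.le_def]

lemma Sfun_succ (v : Fin n → ℕ) {k : ℕ} (hk : k < n) :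
    Sfun n v k = v ⟨k, hk⟩ + Sfun n v (k + 1) := by
  have h : (Finset.univ.filter (fun i : Fin n => k ≤ (i : ℕ)))
      = insert (⟨k, hk⟩ : Fin n) (Finset.univ.filter (fun i : Fin n => k + 1 ≤ (i : ℕ))) := by
    ext i
    simp only [Finset.mem_filter, Finset.mem_univ, true_and, Finset.mem_insert, Fin.ext_iff]
    omega
  rw [Sfun, h, Finset.sum_insert, ← Sfun]
  simp

/-- Suffix sums determine the vector. -/
lemma eq_of_Sfun_eq {v w : Fin n → ℕ} (h : ∀ k, Sfun n v k = Sfun n w k) : v = w := by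
  funext i
  have h1 := Sfun_succ v i.isLt
  have h2 := Sfun_succ w i.isLt
  simp only [Fin.eta] at h1 h2
  have := h i.val
  have := h (i.val + 1)
  omega

/-- Lower bound: strictly monotone maps into `Fin n` grow at least like the identity. -/
lemma strictMono_le_apply {m : ℕ} {f : Fin m → Fin n} (hf : StrictMono f) (r : Fin m) :
    (r : ℕ) ≤ (f r : ℕ) := by
  induction' hr : (r : ℕ) with v ih generalizing r
  · omega
  · have hv : v < m := by omega
    have hlt : (⟨v, hv⟩ : Fin m) < r := by simp [Fin.lt_def]; omega
    have := ih ⟨v, hv⟩ rfl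
    have := hf hlt
    simp only [Fin.lt_def] at this
    omega

/-- Upper bound for strictly monotone maps `Fin m → Fin n`. -/
lemma strictMono_apply_le {m : ℕ} {f : Fin m → Fin n} (hf : StrictMono f) (r : Fin m) :
    (f r : ℕ) ≤ n - m + (r : ℕ) := by
  have hg : StrictMono (fun r : Fin m => (f r.rev).rev) := by
    intro a b hab
    have : b.rev < a.rev := by simp [Fin.lt_def, Fin.val_rev]; omega
    have := hf this
    simp only [Fin.lt_def, Fin.val_rev]
    have h1 := (f b.rev).isLt
    have h2 := (f a.rev).isLt
    omega
  have := strictMono_le_apply hg r.rev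
  simp only [Fin.val_rev, Fin.rev_rev] at this
  have h1 := (f r).isLt
  have h2 := r.isLt
  omega

lemma sum_eq_sum_orderEmb {M : Type*} [AddCommMonoid M] (p : Fin n → M) (S : Finset (Fin n))
    {m : ℕ} (h : S.card = m) :
    ∑ i ∈ S, p i = ∑ r : Fin m, p (S.orderEmbOfFin h r) := by
  have hS : S = Finset.image (S.orderEmbOfFin h) Finset.univ := by
    ext i
    simp only [Finset.mem_image, Finset.mem_univ, true_and]
    constructor
    · intro hi
      have : i ∈ Set.range (S.orderEmbOfFin h) := by
        rw [Finset.range_orderEmbOfFin]; exact hi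
      obtain ⟨r, hr⟩ := this
      exact ⟨r, hr⟩
    · rintro ⟨r, rfl⟩; exact Finset.orderEmbOfFin_mem S h r
  conv_lhs => rw [hS]
  rw [Finset.sum_image]
  intro x _ y _ hxy
  exact (S.orderEmbOfFin h).injective hxy

lemma topIdx_orderEmb (m : ℕ) (hm : m ≤ n)
    (h : (Finset.univ.filter (fun i : Fin n => n - m ≤ (i : ℕ))).card = m) (r : Fin m) :
    (((Finset.univ.filter (fun i : Fin n => n - m ≤ (i : ℕ))).orderEmbOfFin h) r : ℕ)
      = n - m + (r : ℕ) := by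
  set T := Finset.univ.filter (fun i : Fin n => n - m ≤ (i : ℕ)) with hT
  have hf : ∀ x : Fin m, (⟨n - m + x.val, by omega⟩ : Fin n) ∈ T := by
    intro x
    simp only [hT, Finset.mem_filter, Finset.mem_univ, true_and]
    omega
  have hmono : StrictMono (fun x : Fin m => (⟨n - m + x.val, by omega⟩ : Fin n)) := by
    intro a b hab
    simp only [Fin.lt_def] at hab ⊢
    omega
  have := Finset.orderEmbOfFin_unique h hf hmono
  have := congrFun this r
  rw [← this]

/-- KEY1: the sum over any subset is at most the sum of the largest entries. -/
lemma sum_le_Sfun {p : Fin n → ℕ} (hp : Monotone p) (S : Finset (Fin n)) :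
    ∑ i ∈ S, p i ≤ Sfun n p (n - S.card) := by
  set m := S.card with hm
  have hmn : m ≤ n := by
    rw [hm]
    simpa using Finset.card_le_univ S
  set T := Finset.univ.filter (fun i : Fin n => n - m ≤ (i : ℕ)) with hT
  have hTcard : T.card = m := by
    rw [hT, card_filter_geIdx]; omega
  have h1 : ∑ i ∈ S, p i = ∑ r : Fin m, p (S.orderEmbOfFin rfl r) :=
    sum_eq_sum_orderEmb p S rfl
  have h2 : Sfun n p (n - m) = ∑ r : Fin m, p (T.orderEmbOfFin hTcard r) :=
    sum_eq_sum_orderEmb p T hTcard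
  rw [h1, h2]
  apply Finset.sum_le_sum
  intro r _
  apply hp
  rw [Fin.le_def, topIdx_orderEmb m hmn hTcard r]
  exact le_trans (strictMono_apply_le (S.orderEmbOfFin rfl).strictMono r) (le_refl _)

/-- `c` is "dominated" by `lam` in the subset-sum sense. -/
def DomLe (n : ℕ) (lam c : Fin n → ℕ) : Prop :=
  ∀ S : Finset (Fin n), ∑ i ∈ S, c i ≤ Sfun n lam (n - S.card)

lemma domLe_self {lam : Fin n → ℕ} (h : Monotone lam) : DomLe n lam lam :=
  fun S => sum_le_Sfun h S

lemma DomLe.comp_perm {lam c : Fin n → ℕ} (h : DomLe n lam c) (σ : Equiv.Perm (Fin n)) :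
    DomLe n lam (c ∘ σ) := by
  intro S
  have : ∑ i ∈ S, (c ∘ σ) i = ∑ i ∈ S.image σ, c i := by
    rw [Finset.sum_image (fun x _ y _ hxy => σ.injective hxy)]
    rfl
  rw [this]
  have hcard : (S.image σ).card = S.card := Finset.card_image_of_injective S σ.injective
  rw [← hcard]
  exact h _

lemma DomLe.sfun_le {lam c : Fin n → ℕ} (h : DomLe n lam c) (k : ℕ) :
    Sfun n c k ≤ Sfun n lam k := by
  rcases le_or_gt n k with hk | hk
  · rw [Sfun_of_ge c hk, Sfun_of_ge lam hk]
  · have := h (Finset.univ.filter (fun i : Fin n => k ≤ (i : ℕ)))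
    rw [card_filter_geIdx] at this
    have hkk : n - (n - k) = k := by omega
    rw [hkk] at this
    exact this

lemma balance_bracket {a : Fin n → ℕ} {i j : Fin n} (hij : i ≠ j) (hlt : a i < a j)
    (S : Finset (Fin n)) :
    ∑ k ∈ S, (fun k => if k = i then a k + 1 else if k = j then a k - 1 else a k) k
        + (if j ∈ S then 1 else 0)
      = ∑ k ∈ S, a k + (if i ∈ S then 1 else 0) := by
  have key : ∀ k, (if k = i then a k + 1 else if k = j then a k - 1 else a k)
      + (if k = j then 1 else 0) = a k + (if k = i then 1 else 0) := by
    intro k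
    rcases eq_or_ne k i with rfl | hki
    · rw [if_pos rfl, if_pos rfl, if_neg hij]
    · rcases eq_or_ne k j with rfl | hkj
      · rw [if_neg hki, if_pos rfl, if_pos rfl, if_neg hki]
        omega
      · rw [if_neg hki, if_neg hkj, if_neg hkj, if_neg hki]
  calc ∑ k ∈ S, (fun k => if k = i then a k + 1 else if k = j then a k - 1 else a k) k
          + (if j ∈ S then 1 else 0)
      = ∑ k ∈ S, ((fun k => if k = i then a k + 1 else if k = j then a k - 1 else a k) k
          + (if k = j then 1 else 0)) := by
        rw [Finset.sum_add_distrib, Finset.sum_ite_eq' S j (fun _ => 1)]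
    _ = ∑ k ∈ S, (a k + (if k = i then 1 else 0)) := by
        apply Finset.sum_congr rfl; intro k _; exact key k
    _ = ∑ k ∈ S, a k + (if i ∈ S then 1 else 0) := by
        rw [Finset.sum_add_distrib, Finset.sum_ite_eq' S i (fun _ => 1)]

/-- KEY2: a balancing move preserves subset-sum domination. -/
lemma DomLe.balance {lam a : Fin n → ℕ} (h : DomLe n lam a) {i j : Fin n}
    (hij : i ≠ j) (hlt : a i < a j) :
    DomLe n lam (fun k => if k = i then a k + 1 else if k = j then a k - 1 else a k) := by
  intro S
  have hbr := balance_bracket hij hlt S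
  by_cases hi : i ∈ S <;> by_cases hj : j ∈ S
  · -- both in S : sum unchanged
    rw [if_pos hi, if_pos hj] at hbr
    have := h S; omega
  · -- i ∈ S, j ∉ S : compare with insert j (S.erase i)
    rw [if_pos hi, if_neg hj] at hbr
    set S' := insert j (S.erase i) with hS'
    have hjS' : j ∉ S.erase i := fun hmem => hj (Finset.mem_of_mem_erase hmem)
    have hcard : S'.card = S.card := by
      rw [hS', Finset.card_insert_of_notMem hjS', Finset.card_erase_of_mem hi]
      have : 0 < S.card := Finset.card_pos.2 ⟨i, hi⟩
      omega
    have h1 : ∑ k ∈ S', a k = a j + ∑ k ∈ S.erase i, a k := by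
      rw [hS', Finset.sum_insert hjS']
    have h2 : ∑ k ∈ S, a k = a i + ∑ k ∈ S.erase i, a k := (Finset.add_sum_erase S a hi).symm
    have h3 := h S'
    rw [hcard] at h3
    omega
  · -- j ∈ S, i ∉ S
    rw [if_neg hi, if_pos hj] at hbr
    have := h S; omega
  · rw [if_neg hi, if_neg hj] at hbr
    have := h S; omega

lemma balance_sum {a : Fin n → ℕ} {i j : Fin n} (hij : i ≠ j) (hlt : a i < a j) :
    ∑ k, (fun k => if k = i then a k + 1 else if k = j then a k - 1 else a k) k = ∑ k, a k := by
  have hbr := balance_bracket hij hlt Finset.univ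
  rw [if_pos (Finset.mem_univ i), if_pos (Finset.mem_univ j)] at hbr
  omega


variable (K : Type) [Field K]

lemma mon_rename (σ : Equiv.Perm (Fin n)) (a : Fin n → ℕ) :
    rename (σ : Fin n → Fin n) (mon K n a) = mon K n (a ∘ σ.symm) := by
  rw [mon, rename_monomial, mon]
  have h : Finsupp.mapDomain (σ : Fin n → Fin n) (Finsupp.equivFunOnFinite.symm a)
      = Finsupp.equivFunOnFinite.symm (a ∘ σ.symm) := by
    ext i
    rw [Finsupp.mapDomain_equiv_apply (f := σ)]
    simp [Finsupp.coe_equivFunOnFinite_symm]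
  rw [h]

lemma mon_mul (a b : Fin n → ℕ) : mon K n a * mon K n b = mon K n (a + b) := by
  rw [mon, mon, mon, monomial_mul, one_mul]
  have hadd : Finsupp.equivFunOnFinite.symm (a + b)
      = Finsupp.equivFunOnFinite.symm a + Finsupp.equivFunOnFinite.symm b := by
    ext i
    simp [Finsupp.coe_equivFunOnFinite_symm]
  rw [hadd]

lemma mem_span_mon {D : Set (Fin n → ℕ)} {c : Fin n → ℕ} :
    mon K n c ∈ Ideal.span (mon K n '' D) ↔ ∃ d ∈ D, ∀ i, d i ≤ c i := by
  have himg : mon K n '' D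
      = (fun s => monomial s (1 : K)) '' (Finsupp.equivFunOnFinite.symm '' D) := by
    rw [Set.image_image]
    rfl
  rw [himg, mem_ideal_span_monomial_image]
  classical
  have hsupp : (mon K n c).support = {Finsupp.equivFunOnFinite.symm c} := by
    rw [mon, support_monomial, if_neg (one_ne_zero)]
  rw [hsupp]
  simp only [Finset.mem_singleton, forall_eq]
  constructor
  · rintro ⟨si, ⟨d, hd, rfl⟩, hle⟩
    refine ⟨d, hd, fun i => ?_⟩
    have := Finsupp.le_def.1 hle i
    simpa [Finsupp.coe_equivFunOnFinite_symm] using this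
  · rintro ⟨d, hd, hle⟩
    refine ⟨Finsupp.equivFunOnFinite.symm d, ⟨d, hd, rfl⟩, Finsupp.le_def.2 fun i => ?_⟩
    simpa [Finsupp.coe_equivFunOnFinite_symm] using hle i

lemma mon_mem_span (D : Set (Fin n → ℕ)) {c : Fin n → ℕ} (hc : c ∈ D) :
    mon K n c ∈ Ideal.span (mon K n '' D) :=
  Ideal.subset_span ⟨c, hc, rfl⟩

/-- span of monomials over a permutation-closed exponent set is a symmetric ideal -/
lemma span_mon_symmetric {D : Set (Fin n → ℕ)}
    (hD : ∀ (σ : Equiv.Perm (Fin n)), ∀ c ∈ D, c ∘ σ ∈ D) :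
    IsSymmetricIdeal K n (Ideal.span (mon K n '' D)) := by
  intro σ
  rw [Ideal.map_span, ← Set.image_comp]
  congr 1
  ext x
  constructor
  · rintro ⟨c, hc, rfl⟩
    exact ⟨c ∘ σ.symm, hD σ.symm c hc, (mon_rename K σ c).symm ▸ rfl⟩
  · rintro ⟨c, hc, rfl⟩
    refine ⟨c ∘ σ, hD σ c hc, ?_⟩
    show rename (σ : Fin n → Fin n) (mon K n (c ∘ σ)) = mon K n c
    rw [mon_rename]
    have : (c ∘ ⇑σ) ∘ ⇑σ.symm = c := by
      ext i
      simp
    rw [this]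

lemma IsSymmetricIdeal.mon_comp_mem {J : Ideal (MvPolynomial (Fin n) K)}
    (hJ : IsSymmetricIdeal K n J) {a : Fin n → ℕ} (ha : mon K n a ∈ J)
    (σ : Equiv.Perm (Fin n)) : mon K n (a ∘ σ) ∈ J := by
  have := hJ σ.symm
  rw [← this]
  have : rename (σ.symm : Fin n → Fin n) (mon K n a) = mon K n (a ∘ σ) := by
    rw [mon_rename]
    simp
  rw [← this]
  exact Ideal.mem_map_of_mem _ ha

lemma Sfun_zero (v : Fin n → ℕ) : Sfun n v 0 = ∑ i, v i := by
  rw [Sfun]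
  congr 1
  ext i
  simp

/-- Termination measure. -/
def Mmeas (n : ℕ) (v : Fin n → ℕ) : ℕ := ∑ k ∈ Finset.range n, Sfun n v k

lemma Sfun_le_of_comp_perm {v w : Fin n → ℕ} (hw : Monotone w) (ρ : Equiv.Perm (Fin n))
    (hv : v = w ∘ ρ) (k : ℕ) : Sfun n v k ≤ Sfun n w k := by
  subst hv
  exact ((domLe_self hw).comp_perm ρ).sfun_le k

lemma balance_sq {a : Fin n → ℕ} {i j : Fin n} (hij : i ≠ j) (h2 : a i + 1 < a j) :
    ∑ k, ((fun k => if k = i then a k + 1 else if k = j then a k - 1 else a k) k) ^ 2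
        + (2 * a j - 1)
      = ∑ k, (a k) ^ 2 + (2 * a i + 1) := by
  have key : ∀ k, (if k = i then a k + 1 else if k = j then a k - 1 else a k) ^ 2
      + (if k = j then 2 * a j - 1 else 0) = (a k) ^ 2 + (if k = i then 2 * a i + 1 else 0) := by
    intro k
    rcases eq_or_ne k i with rfl | hki
    · rw [if_pos rfl, if_pos rfl, if_neg hij]
      ring
    · rcases eq_or_ne k j with rfl | hkj
      · rw [if_neg hki, if_pos rfl, if_pos rfl, if_neg hki]
        obtain ⟨b, hb⟩ : ∃ b, a k = b + 1 := ⟨a k - 1, by omega⟩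
        rw [hb]
        have e1 : b + 1 - 1 = b := by omega
        have e2 : 2 * (b + 1) - 1 = 2 * b + 1 := by omega
        rw [e1, e2]
        ring
      · rw [if_neg hki, if_neg hkj, if_neg hkj, if_neg hki]
  calc ∑ k, ((fun k => if k = i then a k + 1 else if k = j then a k - 1 else a k) k) ^ 2
          + (2 * a j - 1)
      = ∑ k, (((fun k => if k = i then a k + 1 else if k = j then a k - 1 else a k) k) ^ 2
          + (if k = j then 2 * a j - 1 else 0)) := by
        rw [Finset.sum_add_distrib, Finset.sum_ite_eq' Finset.univ j (fun _ => 2 * a j - 1),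
          if_pos (Finset.mem_univ j)]
    _ = ∑ k, ((a k) ^ 2 + (if k = i then 2 * a i + 1 else 0)) := by
        exact Finset.sum_congr rfl fun k _ => key k
    _ = ∑ k, (a k) ^ 2 + (2 * a i + 1) := by
        rw [Finset.sum_add_distrib, Finset.sum_ite_eq' Finset.univ i (fun _ => 2 * a i + 1),
          if_pos (Finset.mem_univ i)]

/-- KEY4: reachability. In a symmetric strongly shifted situation, from `x^lam` we can
reach `x^mu` for any monotone `mu` dominated by `lam` with the same total degree. -/
lemma reach {J : Ideal (MvPolynomial (Fin n) K)}
    (hsym : IsSymmetricIdeal K n J)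
    (hshift : ∀ lam : Fin n → ℕ, Monotone lam → mon K n lam ∈ J →
      ∀ i j : Fin n, i < j → lam i < lam j → mon K n (borelMoveVec n lam i j) ∈ J) :
    ∀ N : ℕ, ∀ lam : Fin n → ℕ, Mmeas n lam = N → Monotone lam → mon K n lam ∈ J →
    ∀ mu : Fin n → ℕ, Monotone mu → (∑ i, mu i = ∑ i, lam i) →
      (∀ k, Sfun n mu k ≤ Sfun n lam k) → mon K n mu ∈ J := by
  intro N
  induction N using Nat.strong_induction_on with
  | _ N ih =>
  intro lam hN hmlam hmem mu hmmu hsum hdom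
  by_cases hml : mu = lam
  · rw [hml]; exact hmem
  -- find a witness where the suffix sums differ
  have hne : ∃ k, Sfun n mu k ≠ Sfun n lam k := by
    by_contra h
    push_neg at h
    exact hml (eq_of_Sfun_eq h)
  obtain ⟨k0, hk0⟩ := hne
  have hk0lt : Sfun n mu k0 < Sfun n lam k0 := lt_of_le_of_ne (hdom k0) hk0
  have hk0n : k0 < n := by
    by_contra h
    rw [Sfun_of_ge mu (by omega), Sfun_of_ge lam (by omega)] at hk0
    exact hk0 rfl
  set T := (Finset.range n).filter (fun k => Sfun n mu k < Sfun n lam k) with hT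
  have hTne : T.Nonempty := ⟨k0, by simp [hT, Finset.mem_filter, hk0n, hk0lt]⟩
  set t := T.max' hTne with htdef
  have htT : t ∈ T := T.max'_mem hTne
  have htn : t < n := (Finset.mem_filter.1 htT).1 |> Finset.mem_range.1
  have hmt : Sfun n mu t < Sfun n lam t := (Finset.mem_filter.1 htT).2
  have h0T : Sfun n mu 0 = Sfun n lam 0 := by rw [Sfun_zero, Sfun_zero, hsum]
  have ht0 : 0 < t := by
    rcases Nat.eq_zero_or_pos t with h | h
    · rw [h] at hmt; omega
    · exact h
  set S0 := (Finset.range t).filter (fun k => Sfun n mu k = Sfun n lam k) with hS0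
  have h0S : (0 : ℕ) ∈ S0 := by
    simp only [hS0, Finset.mem_filter, Finset.mem_range]
    exact ⟨ht0, h0T⟩
  set s := S0.max' ⟨0, h0S⟩ with hsdef
  have hsS : s ∈ S0 := S0.max'_mem _
  have hstlt : s < t := (Finset.mem_filter.1 hsS).1 |> Finset.mem_range.1
  have hse : Sfun n mu s = Sfun n lam s := (Finset.mem_filter.1 hsS).2
  have hsn : s < n := by omega
  have hst : ∀ k, s < k → k ≤ t → Sfun n mu k < Sfun n lam k := by
    intro k hk1 hk2
    rcases eq_or_lt_of_le hk2 with rfl | hk3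
    · exact hmt
    · by_contra h
      have heq : Sfun n mu k = Sfun n lam k := le_antisymm (hdom k) (not_lt.1 h)
      have : k ∈ S0 := by
        simp only [hS0, Finset.mem_filter, Finset.mem_range]
        exact ⟨hk3, heq⟩
      have := S0.le_max' k this
      omega
  have ht1 : Sfun n mu (t + 1) = Sfun n lam (t + 1) := by
    rcases lt_or_ge (t + 1) n with h | h
    · have hnotT : (t + 1) ∉ T := fun hmem => absurd (T.le_max' _ hmem) (by omega)
      have : ¬ (Sfun n mu (t + 1) < Sfun n lam (t + 1)) := by
        intro hc
        exact hnotT (by simp [hT, Finset.mem_filter, h, hc])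
      exact le_antisymm (hdom _) (not_lt.1 this)
    · rw [Sfun_of_ge mu h, Sfun_of_ge lam h]
  have hs1 : Sfun n mu (s + 1) < Sfun n lam (s + 1) := hst (s + 1) (by omega) (by omega)
  -- pointwise consequences
  have hls : lam ⟨s, hsn⟩ < mu ⟨s, hsn⟩ := by
    have h1 := Sfun_succ lam hsn
    have h2 := Sfun_succ mu hsn
    omega
  have hlt2 : mu ⟨t, htn⟩ < lam ⟨t, htn⟩ := by
    have h1 := Sfun_succ lam htn
    have h2 := Sfun_succ mu htn
    omega
  have hmust : mu ⟨s, hsn⟩ ≤ mu ⟨t, htn⟩ := hmmu (by simp [Fin.le_def]; omega)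
  have h2 : lam ⟨s, hsn⟩ + 1 < lam ⟨t, htn⟩ := by omega
  have hlamst : lam ⟨s, hsn⟩ < lam ⟨t, htn⟩ := by omega
  have hijF : (⟨s, hsn⟩ : Fin n) < ⟨t, htn⟩ := by simp [Fin.lt_def]; omega
  have hijne : (⟨s, hsn⟩ : Fin n) ≠ ⟨t, htn⟩ := ne_of_lt hijF
  -- the move
  set lam' := borelMoveVec n lam ⟨s, hsn⟩ ⟨t, htn⟩ with hlam'
  have hlam'eq : lam' = fun k => if k = (⟨s, hsn⟩ : Fin n) then lam k + 1
      else if k = (⟨t, htn⟩ : Fin n) then lam k - 1 else lam k := rfl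
  have hmem' : mon K n lam' ∈ J := hshift lam hmlam hmem _ _ hijF hlamst
  set ρ := Tuple.sort lam' with hρ
  set lam'' := lam' ∘ ρ with hlam''
  have hm'' : Monotone lam'' := Tuple.monotone_sort lam'
  have hmem'' : mon K n lam'' ∈ J := hsym.mon_comp_mem K hmem' ρ
  have hdom' : DomLe n lam lam' := by
    rw [hlam'eq]
    exact (domLe_self hmlam).balance hijne hlamst
  have hdom'' : DomLe n lam lam'' := hdom'.comp_perm ρ
  have hsum' : ∑ i, lam' i = ∑ i, lam i := by
    rw [hlam'eq]
    exact balance_sum hijne hlamst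
  have hsum'' : ∑ i, lam'' i = ∑ i, lam i := by
    rw [hlam'', ← hsum']
    exact Equiv.sum_comp ρ lam'
  have hSle : ∀ k, Sfun n lam'' k ≤ Sfun n lam k := hdom''.sfun_le
  -- mu is still dominated by lam''
  have hlam'lam'' : ∀ k, Sfun n lam' k ≤ Sfun n lam'' k := by
    apply Sfun_le_of_comp_perm hm'' ρ⁻¹
    funext x
    simp [hlam'', Function.comp]
  have hmu'' : ∀ k, Sfun n mu k ≤ Sfun n lam'' k := by
    intro k
    refine le_trans ?_ (hlam'lam'' k)
    -- compare Sfun lam' k with Sfun lam k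
    have hbr := balance_bracket hijne hlamst
      (Finset.univ.filter (fun i : Fin n => k ≤ (i : ℕ)))
    rw [← hlam'eq] at hbr
    have hmems : ((⟨s, hsn⟩ : Fin n) ∈ Finset.univ.filter (fun i : Fin n => k ≤ (i : ℕ)))
        ↔ k ≤ s := by simp
    have hmemt : ((⟨t, htn⟩ : Fin n) ∈ Finset.univ.filter (fun i : Fin n => k ≤ (i : ℕ)))
        ↔ k ≤ t := by simp
    have hSl' : Sfun n lam' k + (if k ≤ t then 1 else 0)
        = Sfun n lam k + (if k ≤ s then 1 else 0) := by
      rw [Sfun, Sfun]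
      simp only [hmems, hmemt] at hbr
      exact hbr
    rcases le_or_gt k s with h | h
    · have := hdom k
      rw [if_pos (by omega : k ≤ t), if_pos h] at hSl'
      omega
    · rcases le_or_gt k t with h' | h'
      · have := hst k h h'
        rw [if_pos h', if_neg (by omega)] at hSl'
        omega
      · have := hdom k
        rw [if_neg (by omega), if_neg (by omega)] at hSl'
        omega
  -- strict decrease of the measure
  have hMlt : Mmeas n lam'' < Mmeas n lam := by
    have hle : Mmeas n lam'' ≤ Mmeas n lam :=
      Finset.sum_le_sum fun k _ => hSle k
    rcases lt_or_eq_of_le hle with h | h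
    · exact h
    -- equality forces lam'' = lam, contradicting the sum-of-squares drop
    exfalso
    have hall : ∀ k ∈ Finset.range n, Sfun n lam'' k = Sfun n lam k := by
      have := (Finset.sum_eq_sum_iff_of_le (fun k _ => hSle k)).1 h
      intro k hk
      exact this k hk
    have hallk : ∀ k, Sfun n lam'' k = Sfun n lam k := by
      intro k
      rcases lt_or_ge k n with hk | hk
      · exact hall k (Finset.mem_range.2 hk)
      · rw [Sfun_of_ge _ hk, Sfun_of_ge _ hk]
    have heq : lam'' = lam := eq_of_Sfun_eq hallk
    have hsq1 : ∑ i, (lam'' i) ^ 2 = ∑ i, (lam' i) ^ 2 :=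
      Equiv.sum_comp ρ (fun x => (lam' x) ^ 2)
    have hsq2 := balance_sq hijne h2
    rw [← hlam'eq] at hsq2
    rw [heq] at hsq1
    rw [hsq1] at hsq2
    omega
  -- recurse
  exact ih (Mmeas n lam'') (hN ▸ hMlt) lam'' rfl hm'' hmem'' mu hmmu
    (hsum.trans hsum''.symm) hmu''

/-- The exponent set generating `Sss B` as a plain monomial ideal. -/
def Sset (n : ℕ) (B : Set (Fin n → ℕ)) : Set (Fin n → ℕ) :=
  {c | ∃ lam ∈ B, (∑ i, c i = ∑ i, lam i) ∧ DomLe n lam c}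

lemma Sset_perm {B : Set (Fin n → ℕ)} (σ : Equiv.Perm (Fin n)) {c : Fin n → ℕ}
    (hc : c ∈ Sset n B) : c ∘ σ ∈ Sset n B := by
  obtain ⟨lam, hlam, hsum, hdom⟩ := hc
  exact ⟨lam, hlam, by rw [← hsum]; exact Equiv.sum_comp σ c, hdom.comp_perm σ⟩

lemma Sset_balance {B : Set (Fin n → ℕ)} {c : Fin n → ℕ} (hc : c ∈ Sset n B)
    {i j : Fin n} (hij : i ≠ j) (hlt : c i < c j) :
    (fun k => if k = i then c k + 1 else if k = j then c k - 1 else c k) ∈ Sset n B := by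
  obtain ⟨lam, hlam, hsum, hdom⟩ := hc
  exact ⟨lam, hlam, by rw [balance_sum hij hlt]; exact hsum, hdom.balance hij hlt⟩

lemma self_mem_Sset {B : Set (Fin n → ℕ)} {lam : Fin n → ℕ} (hlam : lam ∈ B)
    (hm : Monotone lam) : lam ∈ Sset n B :=
  ⟨lam, hlam, rfl, domLe_self hm⟩

/-- A span of monomials over a permutation- and balance-closed exponent set is an SSSI. -/
lemma span_mon_isSSSI {D : Set (Fin n → ℕ)}
    (hperm : ∀ (σ : Equiv.Perm (Fin n)), ∀ c ∈ D, c ∘ σ ∈ D)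
    (hbal : ∀ c ∈ D, ∀ i j : Fin n, i ≠ j → c i < c j →
      (fun k => if k = i then c k + 1 else if k = j then c k - 1 else c k) ∈ D) :
    IsSSSI K n (Ideal.span (mon K n '' D)) := by
  refine ⟨⟨D, rfl⟩, span_mon_symmetric K hperm, ?_⟩
  intro lam hmlam hmem i j hij hlt
  rw [mem_span_mon] at hmem ⊢
  obtain ⟨d, hd, hle⟩ := hmem
  by_cases hdj : d j ≤ lam j - 1
  · refine ⟨d, hd, fun k => ?_⟩
    rw [borelMoveVec]
    rcases eq_or_ne k i with rfl | hki
    · rw [if_pos rfl]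
      exact le_trans (hle k) (by omega)
    · rcases eq_or_ne k j with rfl | hkj
      · rw [if_neg hki, if_pos rfl]
        exact hdj
      · rw [if_neg hki, if_neg hkj]
        exact hle k
  · have hdj' : d j = lam j := by
      have := hle j
      omega
    have hdij : d i < d j := by
      have := hle i
      omega
    refine ⟨_, hbal d hd i j (ne_of_lt hij) hdij, fun k => ?_⟩
    rw [borelMoveVec]
    rcases eq_or_ne k i with rfl | hki
    · rw [if_pos rfl, if_pos rfl]
      have := hle k
      omega
    · rcases eq_or_ne k j with rfl | hkj
      · rw [if_neg hki, if_pos rfl, if_neg hki, if_pos rfl]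
        omega
      · rw [if_neg hki, if_neg hkj, if_neg hki, if_neg hkj]
        exact hle k

/-- Characterization: `Sss B` is the span of the monomials with exponents in `Sset B`. -/
lemma Sss_char {B : Set (Fin n → ℕ)} (hB : ∀ lam ∈ B, Monotone lam) :
    Sss K n B = Ideal.span (mon K n '' Sset n B) := by
  apply le_antisymm
  · apply sInf_le
    refine ⟨span_mon_isSSSI K (fun σ c hc => Sset_perm σ hc)
      (fun c hc i j hij hlt => Sset_balance hc hij hlt), ?_⟩
    intro lam hlam
    exact mon_mem_span K _ (self_mem_Sset hlam (hB lam hlam))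
  · rw [Ideal.span_le]
    rintro x ⟨c, hc, rfl⟩
    rw [SetLike.mem_coe, Sss, Submodule.mem_sInf]
    intro J hJ
    obtain ⟨⟨hJmono, hJsym, hJshift⟩, hJB⟩ := hJ
    obtain ⟨lam, hlam, hsum, hdom⟩ := hc
    -- sort c
    set ρ := Tuple.sort c with hρ
    set p := c ∘ ρ with hp
    have hmp : Monotone p := Tuple.monotone_sort c
    have hdomp : DomLe n lam p := hdom.comp_perm ρ
    have hsump : ∑ i, p i = ∑ i, lam i := by
      rw [hp, ← hsum]
      exact Equiv.sum_comp ρ c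
    have hmemlam : mon K n lam ∈ J := hJB lam hlam
    have hmemp : mon K n p ∈ J :=
      reach K hJsym hJshift (Mmeas n lam) lam rfl (hB lam hlam) hmemlam p hmp hsump
        hdomp.sfun_le
    have hc' : p ∘ (ρ⁻¹ : Equiv.Perm (Fin n)) = c := by
      funext x
      simp [hp]
    have hfin := hJsym.mon_comp_mem K hmemp ρ⁻¹
    rw [hc'] at hfin
    exact hfin

lemma sum_split {a b : Fin n → ℕ} {i j : Fin n} (hij : i ≠ j) (hab : a i < a j) :
    (fun k => if k = i then (a + b) k + 1 else if k = j then (a + b) k - 1 else (a + b) k)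
      = (fun k => if k = i then a k + 1 else if k = j then a k - 1 else a k) + b := by
  funext k
  simp only [Pi.add_apply]
  rcases eq_or_ne k i with rfl | hki
  · rw [if_pos rfl, if_pos rfl]
    omega
  · rcases eq_or_ne k j with rfl | hkj
    · rw [if_neg hki, if_pos rfl, if_neg hki, if_pos rfl]
      omega
    · rw [if_neg hki, if_neg hkj, if_neg hki, if_neg hkj]

/-- The first half: products of Sss ideals. -/
lemma Sss_mul (A B : Set (Fin n → ℕ))
    (hA : ∀ lam ∈ A, Monotone lam) (hB : ∀ lam ∈ B, Monotone lam) :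
    Sss K n A * Sss K n B = Sss K n {p | ∃ lam ∈ A, ∃ μ ∈ B, p = lam + μ} := by
  set AB : Set (Fin n → ℕ) := {p | ∃ lam ∈ A, ∃ μ ∈ B, p = lam + μ} with hABdef
  have hAB : ∀ lam ∈ AB, Monotone lam := by
    rintro p ⟨lam, hl, mu, hm, rfl⟩
    exact (hA _ hl).add (hB _ hm)
  set D : Set (Fin n → ℕ) := {c | ∃ a ∈ Sset n A, ∃ b ∈ Sset n B, c = a + b} with hDdef
  have hDperm : ∀ (σ : Equiv.Perm (Fin n)), ∀ c ∈ D, c ∘ σ ∈ D := by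
    rintro σ c ⟨a, ha, b, hb, rfl⟩
    exact ⟨a ∘ σ, Sset_perm σ ha, b ∘ σ, Sset_perm σ hb, rfl⟩
  have hDbal : ∀ c ∈ D, ∀ i j : Fin n, i ≠ j → c i < c j →
      (fun k => if k = i then c k + 1 else if k = j then c k - 1 else c k) ∈ D := by
    rintro c ⟨a, ha, b, hb, rfl⟩ i j hij hlt
    simp only [Pi.add_apply] at hlt
    rcases lt_or_ge (a i) (a j) with h | h
    · exact ⟨_, Sset_balance ha hij h, b, hb, sum_split hij h⟩
    · have hb' : b i < b j := by omega
      have hswap : (fun k => if k = i then (a + b) k + 1 else if k = j then (a + b) k - 1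
          else (a + b) k)
          = (fun k => if k = i then b k + 1 else if k = j then b k - 1 else b k) + a := by
        have := sum_split (a := b) (b := a) hij hb'
        rw [show b + a = a + b from add_comm b a] at this
        exact this
      exact ⟨a, ha, _, Sset_balance hb hij hb', by rw [hswap, add_comm]⟩
  -- the product is the span of monomials with exponents in D
  have hprod : Sss K n A * Sss K n B = Ideal.span (mon K n '' D) := by
    rw [Sss_char K hA, Sss_char K hB, Ideal.span_mul_span]
    congr 1
    ext z
    simp only [Set.mem_iUnion, Set.mem_singleton_iff, Set.mem_image]
    constructor
    · rintro ⟨x, ⟨a, ha, rfl⟩, y, ⟨b, hb, rfl⟩, rfl⟩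
      exact ⟨a + b, ⟨a, ha, b, hb, rfl⟩, (mon_mul K a b).symm⟩
    · rintro ⟨c, ⟨a, ha, b, hb, rfl⟩, rfl⟩
      exact ⟨mon K n a, ⟨a, ha, rfl⟩, mon K n b, ⟨b, hb, rfl⟩, mon_mul K a b⟩
  rw [hprod]
  apply le_antisymm
  · rw [Sss_char K hAB, Ideal.span_le]
    rintro x ⟨c, ⟨a, ⟨lam, hlam, hsa, hda⟩, b, ⟨mu, hmu, hsb, hdb⟩, rfl⟩, rfl⟩
    apply mon_mem_span
    refine ⟨lam + mu, ⟨lam, hlam, mu, hmu, rfl⟩, ?_, ?_⟩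
    · simp only [Pi.add_apply, Finset.sum_add_distrib]
      omega
    · intro S
      simp only [Pi.add_apply, Finset.sum_add_distrib, Sfun_add]
      exact Nat.add_le_add (hda S) (hdb S)
  · apply sInf_le
    refine ⟨span_mon_isSSSI K hDperm hDbal, ?_⟩
    rintro p ⟨lam, hlam, mu, hmu, rfl⟩
    apply mon_mem_span
    exact ⟨lam, self_mem_Sset hlam (hA lam hlam), mu, self_mem_Sset hmu (hB mu hmu), rfl⟩

/-- The second half: the dominance inequality. -/
lemma dom_part2 {lam mu lam' mu' : Fin n → ℕ}
    (hm1 : Monotone lam') (hm2 : Monotone mu')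
    (hd1 : dominates n lam' lam) (hd2 : dominates n mu' mu)
    (σ τ : Equiv.Perm (Fin n)) (p : Fin n → ℕ)
    (hex : ∃ ρ : Equiv.Perm (Fin n), p = (fun k => lam' (σ k) + mu' (τ k)) ∘ ρ) :
    dominates n p (lam + mu) := by
  obtain ⟨ρ, rfl⟩ := hex
  intro k
  rw [Ici_eq_filter]
  set F := Finset.univ.filter (fun i : Fin n => (k : ℕ) ≤ (i : ℕ)) with hF
  have hFcard : F.card = n - (k : ℕ) := card_filter_geIdx _
  set G := F.image ρ with hG
  have hGcard : G.card = n - (k : ℕ) := by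
    rw [hG, Finset.card_image_of_injective F ρ.injective, hFcard]
  have h1 : ∑ i ∈ F, ((fun k => lam' (σ k) + mu' (τ k)) ∘ ρ) i
      = ∑ i ∈ G, (lam' (σ i) + mu' (τ i)) := by
    rw [hG, Finset.sum_image (fun x _ y _ hxy => ρ.injective hxy)]
    rfl
  have h2 : ∑ i ∈ G, (lam' (σ i) + mu' (τ i))
      = ∑ i ∈ G.image σ, lam' i + ∑ i ∈ G.image τ, mu' i := by
    rw [Finset.sum_add_distrib,
      Finset.sum_image (fun x _ y _ hxy => σ.injective hxy),
      Finset.sum_image (fun x _ y _ hxy => τ.injective hxy)]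
  have hknn : n - (n - (k : ℕ)) = (k : ℕ) := by
    have := k.isLt
    omega
  have h3 : ∑ i ∈ G.image σ, lam' i ≤ Sfun n lam (k : ℕ) := by
    have := sum_le_Sfun hm1 (G.image σ)
    rw [Finset.card_image_of_injective G σ.injective, hGcard, hknn] at this
    refine le_trans this ?_
    have := hd1 k
    rw [Ici_eq_filter] at this
    exact this
  have h4 : ∑ i ∈ G.image τ, mu' i ≤ Sfun n mu (k : ℕ) := by
    have := sum_le_Sfun hm2 (G.image τ)
    rw [Finset.card_image_of_injective G τ.injective, hGcard, hknn] at this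
    refine le_trans this ?_
    have := hd2 k
    rw [Ici_eq_filter] at this
    exact this
  have h5 : ∑ i ∈ F, (lam + mu) i = Sfun n lam (k : ℕ) + Sfun n mu (k : ℕ) := by
    simp only [Pi.add_apply, Finset.sum_add_distrib]
    rfl
  omega

end Helpers

/-- For sets of partitions `A, B ⊆ P_n`, one has
`Sss(A) · Sss(B) = Sss(A + B)` where `A + B = {λ + μ : λ ∈ A, μ ∈ B}`.
In particular, for partitions `λ' ⊴ λ` and `μ' ⊴ μ` (of the same sizes) and
permutations `σ, τ`, the weakly increasing rearrangement of `σ(λ') + τ(μ')`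
is dominated by `λ + μ`. -/
theorem sss_product (K : Type) [Field K] (n : ℕ) (A B : Set (Fin n → ℕ))
    (hA : ∀ lam ∈ A, Monotone lam) (hB : ∀ lam ∈ B, Monotone lam) :
    Sss K n A * Sss K n B = Sss K n {p | ∃ lam ∈ A, ∃ μ ∈ B, p = lam + μ} ∧
    ∀ lam μ lam' μ' : Fin n → ℕ,
      Monotone lam → Monotone μ → Monotone lam' → Monotone μ' →
      ∑ i, lam' i = ∑ i, lam i → ∑ i, μ' i = ∑ i, μ i →
      dominates n lam' lam → dominates n μ' μ →
      ∀ (σ τ : Equiv.Perm (Fin n)) (p : Fin n → ℕ), Monotone p →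
        (∃ ρ : Equiv.Perm (Fin n),
          p = (fun k => lam' (σ k) + μ' (τ k)) ∘ ρ) →
        dominates n p (lam + μ) := by
  refine ⟨Sss_mul K A B hA hB, ?_⟩
  intro lam mu lam' mu' _ _ hm1 hm2 _ _ hd1 hd2 σ τ p _ hex
  exact dom_part2 hm1 hm2 hd1 hd2 σ τ p hex
end
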